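/- Let G be a connected finite simple graph on vertex set V whose diameter is at most D and whose maximum vertex degree is at most Δ. Then for every finite set F ⊆ V of vertices and every pair of vertices u, v ∉ F that lie in the same connected component of the induced subgraph G[V ∖ F], the distance between u and v in G[V ∖ F] is at most (|F|·Δ + 1)·(2D + 1). -/
import Mathlib

open SimpleGraph

lemma take_aux {V : Type} {G : SimpleGraph V} {a b : V} (w : G.Walk a b) (n : ℕ) :
    ∃ w1 : G.Walk a (w.getVert n), w1.length ≤ n := by
  induction w generalizing n with
  | nil => exact ⟨Walk.nil.copy rfl (by cases n <;> rfl), by simp⟩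
  | cons h q ih =>
    cases n with
    | zero => exact ⟨Walk.nil.copy rfl (Walk.getVert_zero _).symm, by simp⟩
    | succ n =>
      obtain ⟨w1, hw1⟩ := ih n
      exact ⟨(Walk.cons h w1).copy rfl (by simp), by simpa using hw1⟩

lemma drop_aux {V : Type} {G : SimpleGraph V} {a b : V} (w : G.Walk a b) (n : ℕ) :
    ∃ w2 : G.Walk (w.getVert n) b, w2.length ≤ w.length - n := by
  induction w generalizing n with
  | nil => exact ⟨Walk.nil.copy (by cases n <;> rfl) rfl, by simp⟩
  | cons h q ih =>
    cases n with
    | zero => exact ⟨(Walk.cons h q).copy (Walk.getVert_zero _).symm rfl, by simp⟩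
    | succ n =>
      obtain ⟨w2, hw2⟩ := ih n
      exact ⟨w2.copy (by simp) rfl, by simp; omega⟩

lemma lift_aux {V : Type} {G : SimpleGraph V} {s : Set V} {a b : V} (w : G.Walk a b)
    (ha : a ∈ s) (hb : b ∈ s) (hsup : ∀ x ∈ w.support, x ∈ s) :
    ∃ w' : (G.induce s).Walk ⟨a, ha⟩ ⟨b, hb⟩, w'.length = w.length := by
  induction w with
  | nil => exact ⟨Walk.nil, rfl⟩
  | @cons a x b h q ih =>
    have hx : x ∈ s := hsup x (by simp)
    obtain ⟨w', hw'⟩ := ih hx hb (fun y hy => hsup y (by simp [hy]))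
    have hadj : (G.induce s).Adj ⟨a, ha⟩ ⟨x, hx⟩ := h
    exact ⟨Walk.cons hadj w', by simp [hw']⟩

lemma key_aux {V : Type} {G : SimpleGraph V} {s : Set V} {a b : V} (w : G.Walk a b)
    (ha : a ∈ s) (hbad : ∃ x ∈ w.support, x ∉ s) :
    ∃ c, ∃ hc : c ∈ s, ∃ f, f ∉ s ∧ G.Adj c f ∧
      ∃ w' : (G.induce s).Walk ⟨a, ha⟩ ⟨c, hc⟩, w'.length + 1 ≤ w.length := by
  induction w with
  | nil =>
    obtain ⟨x, hx, hxs⟩ := hbad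
    simp at hx
    exact absurd (hx ▸ ha) hxs
  | @cons a x b h q ih =>
    by_cases hx : x ∈ s
    · have hbad' : ∃ y ∈ q.support, y ∉ s := by
        obtain ⟨y, hy, hys⟩ := hbad
        simp only [Walk.support_cons, List.mem_cons] at hy
        rcases hy with rfl | hy
        · exact absurd ha hys
        · exact ⟨y, hy, hys⟩
      obtain ⟨c, hc, f, hf, hadj, w', hw'⟩ := ih hx hbad'
      have hadj0 : (G.induce s).Adj ⟨a, ha⟩ ⟨x, hx⟩ := h
      exact ⟨c, hc, f, hf, hadj, Walk.cons hadj0 w', by simp; omega⟩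
    · exact ⟨a, ha, x, hx, h, Walk.nil, by simp⟩

/-- In a connected graph of diameter at most `D` and maximum degree at most `Δ`,
after deleting a finite set `F` of vertices, any two surviving vertices that remain in the
same connected component of the induced subgraph are at distance at most
`(|F|·Δ + 1) * (2D + 1)` therein. -/
theorem stmt_1 {V : Type} [Fintype V] [DecidableEq V] (G : SimpleGraph V)
    [DecidableRel G.Adj] (D Δ : ℕ)
    (hconn : G.Connected) (hdiam : ∀ u v : V, G.dist u v ≤ D)
    (hdeg : ∀ v : V, G.degree v ≤ Δ)
    (F : Finset V) (u v : V) (hu : u ∉ F) (hv : v ∉ F)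
    (h : (G.induce {x : V | x ∉ F}).Reachable ⟨u, hu⟩ ⟨v, hv⟩) :
    (G.induce {x : V | x ∉ F}).dist ⟨u, hu⟩ ⟨v, hv⟩ ≤ (F.card * Δ + 1) * (2 * D + 1) := by
  classical
  set s : Set V := {x : V | x ∉ F} with hs
  set H := G.induce s with hH
  by_contra hcon
  push_neg at hcon
  obtain ⟨p, hp⟩ := h.exists_walk_length_eq_dist
  set m : ℕ := F.card * Δ + 1 with hm
  have hL : m * (2 * D + 1) + 1 ≤ p.length := by rw [hp]; exact hcon
  set X : ℕ := 2 * D + 1 with hX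
  set g : ℕ → ↑s := fun k => p.getVert (k * X) with hg
  -- lower bound on H-distances between marked vertices
  have low : ∀ i j : ℕ, i ≤ j → j ≤ m → (j - i) * X ≤ H.dist (g i) (g j) := by
    intro i j hij hjm
    obtain ⟨w1, hw1⟩ := take_aux p (i * X)
    obtain ⟨wj, hwj⟩ := take_aux p (j * X)
    obtain ⟨w3, hw3⟩ := drop_aux p (j * X)
    have hreach : H.Reachable (g i) (g j) := ⟨w1.reverse.append wj⟩
    obtain ⟨w2, hw2⟩ := hreach.exists_walk_length_eq_dist
    have hfull := SimpleGraph.dist_le ((w1.append w2).append w3)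
    rw [← hp] at hfull
    simp only [SimpleGraph.Walk.length_append] at hfull
    have hiX : i * X ≤ j * X := Nat.mul_le_mul_right _ hij
    have hjX : j * X ≤ p.length := le_trans (Nat.mul_le_mul_right _ hjm) (by omega)
    have hsub : (j - i) * X = j * X - i * X := Nat.sub_mul j i X
    omega
  -- for each marked vertex (k ≥ 1), find a neighbor of F close to it in H
  have hstep : ∀ k, 1 ≤ k → k ≤ m → ∃ c, ∃ hc : c ∈ s, ∃ f, f ∈ F ∧ G.Adj c f ∧
      ∃ w' : H.Walk (g k) ⟨c, hc⟩, w'.length ≤ D := by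
    intro k hk1 hkm
    obtain ⟨w, hw⟩ := (hconn.preconnected (g k).1 (g 0).1).exists_walk_length_eq_dist
    have hwD : w.length ≤ D := by rw [hw]; exact hdiam _ _
    have hlow : X ≤ H.dist (g 0) (g k) := by
      have := low 0 k (Nat.zero_le _) hkm
      have h1 : 1 * X ≤ (k - 0) * X := Nat.mul_le_mul_right _ (by omega)
      omega
    by_cases hall : ∀ x ∈ w.support, x ∈ s
    · obtain ⟨w', hw'⟩ := lift_aux w (g k).2 (g 0).2 hall
      have : H.dist (g k) (g 0) ≤ D := by
        calc H.dist (g k) (g 0) ≤ w'.length := SimpleGraph.dist_le w'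
        _ = w.length := hw'
        _ ≤ D := hwD
      rw [SimpleGraph.dist_comm] at this
      omega
    · push_neg at hall
      obtain ⟨c, hc, f, hf, hadj, w', hw'⟩ := key_aux w (g k).2 hall
      refine ⟨c, hc, f, ?_, hadj, w', by omega⟩
      simpa [hs] using hf
  -- choose the neighbors
  have hstep' : ∀ k : ℕ, ∃ c : V, 1 ≤ k → k ≤ m → ∃ hc : c ∈ s, ∃ f, f ∈ F ∧ G.Adj c f ∧
      ∃ w' : H.Walk (g k) ⟨c, hc⟩, w'.length ≤ D := by
    intro k
    by_cases hk : 1 ≤ k ∧ k ≤ m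
    · obtain ⟨c, hrest⟩ := hstep k hk.1 hk.2
      exact ⟨c, fun _ _ => hrest⟩
    · exact ⟨u, fun h1 h2 => absurd ⟨h1, h2⟩ hk⟩
  choose c hcprop using hstep'
  -- injectivity
  have hinj : ∀ k k', 1 ≤ k → k ≤ m → 1 ≤ k' → k' ≤ m → k < k' → c k ≠ c k' := by
    intro k k' hk1 hkm hk1' hkm' hlt heq
    obtain ⟨hc, f, hf, hadj, w1, hw1⟩ := hcprop k hk1 hkm
    obtain ⟨hc', f', hf', hadj', w2, hw2⟩ := hcprop k' hk1' hkm'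
    have hEq : (⟨c k', hc'⟩ : ↑s) = ⟨c k, hc⟩ := Subtype.ext heq.symm
    have hdk : H.dist (g k) (g k') ≤ 2 * D := by
      have := SimpleGraph.dist_le (w1.append ((w2.copy rfl hEq).reverse))
      simp only [SimpleGraph.Walk.length_append, SimpleGraph.Walk.length_reverse, SimpleGraph.Walk.length_copy] at this
      omega
    have hlow := low k k' (le_of_lt hlt) hkm'
    have h1 : 1 * X ≤ (k' - k) * X := Nat.mul_le_mul_right _ (by omega)
    omega
  -- counting
  have hmaps : ∀ k ∈ Finset.Icc 1 m, c k ∈ F.biUnion (fun f => G.neighborFinset f) := by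
    intro k hk
    rw [Finset.mem_Icc] at hk
    obtain ⟨hc, f, hf, hadj, -⟩ := hcprop k hk.1 hk.2
    exact Finset.mem_biUnion.2 ⟨f, hf, (SimpleGraph.mem_neighborFinset _ _ _).2 hadj.symm⟩
  have hinjOn : Set.InjOn c (Finset.Icc 1 m) := by
    intro k hk k' hk' heq
    rw [Finset.coe_Icc, Set.mem_Icc] at hk hk'
    by_contra hne
    rcases Nat.lt_or_ge k k' with hlt | hge
    · exact hinj k k' hk.1 hk.2 hk'.1 hk'.2 hlt heq
    · exact hinj k' k hk'.1 hk'.2 hk.1 hk.2 (by omega) heq.symm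
  have hcard := Finset.card_le_card_of_injOn c hmaps hinjOn
  have hub : (F.biUnion (fun f => G.neighborFinset f)).card ≤ F.card * Δ := by
    calc (F.biUnion (fun f => G.neighborFinset f)).card ≤ ∑ f ∈ F, (G.neighborFinset f).card :=
          Finset.card_biUnion_le
    _ ≤ ∑ _f ∈ F, Δ := Finset.sum_le_sum (fun f _ => hdeg f)
    _ = F.card * Δ := by rw [Finset.sum_const, smul_eq_mul]
  rw [Nat.card_Icc] at hcard
  omega
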